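/- Let R be a discrete valuation ring with fraction field K, and let M and L be two R-lattices of full rank in an n-dimensional K-vector space V. Define s = min{k : π^k L ⊆ M} and r = max{k : M ⊆ π^k L}, where π is a uniformizer. Then s ≥ r, and the combinatorial distance between the lattice classes {M} and {L} in the Bruhat-Tits building of PGL(V) equals s - r. -/

import Mathlib

open Pointwise

section BruhatTits

variable {R : Type*} [CommRing R] [IsDomain R] [IsDiscreteValuationRing R]
  {K : Type*} [Field K] [Algebra R K] [IsFractionRing R K]
  {V : Type*} [AddCommGroup V] [Module K V] [Module R V] [IsScalarTower R K V]
  [SMulCommClass K R V]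

/-- Two `R`-lattices in `V` are homothetic (define the same lattice class) if they
differ by a nonzero scalar of `K`. -/
def LatEquiv (M N : Submodule R V) : Prop := ∃ c : K, c ≠ 0 ∧ M = c • N

/-- Two lattice classes, represented by lattices `M` and `N`, are adjacent vertices
of the Bruhat–Tits building if they are different and have representatives `M'`,
`N'` with `π N' ⊆ M' ⊆ N'`. -/
def LatAdjacent (π : R) (M N : Submodule R V) : Prop :=
  ¬ LatEquiv (K := K) M N ∧ ∃ M' N' : Submodule R V, LatEquiv (K := K) M' M ∧ LatEquiv (K := K) N' N ∧
    (algebraMap R K π) • N' ≤ M' ∧ M' ≤ N'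

end BruhatTits

section AuxLat

variable {R : Type*} [CommRing R] [IsDomain R] [IsDiscreteValuationRing R]
  {K : Type*} [Field K] [Algebra R K] [IsFractionRing R K]
  {V : Type*} [AddCommGroup V] [Module K V] [Module R V] [IsScalarTower R K V]
  [SMulCommClass K R V]

lemma latSmulMono (a : K) {X Y : Submodule R V} (h : X ≤ Y) : a • X ≤ a • Y :=
  Submodule.map_mono h

lemma latSmulCancel {a : K} (ha : a ≠ 0) {X Y : Submodule R V} (h : a • X ≤ a • Y) :
    X ≤ Y := by
  have h2 := latSmulMono a⁻¹ h
  rwa [smul_smul, smul_smul, inv_mul_cancel₀ ha, one_smul, one_smul] at h2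

lemma latAlgSmulLe (π : R) (X : Submodule R V) : (algebraMap R K π) • X ≤ X := by
  rintro x ⟨y, hy, rfl⟩
  show (algebraMap R K π) • y ∈ X
  rw [algebraMap_smul]
  exact X.smul_mem π hy

lemma latPowSmulLe {a : K} {A : Submodule R V} (hA : a • A ≤ A) (k : ℕ) : a ^ k • A ≤ A := by
  induction k with
  | zero => simp
  | succ k ih =>
    rw [pow_succ, mul_comm, mul_smul]
    exact le_trans (latSmulMono a ih) hA

lemma latZpowSmulLe (π : R) (X : Submodule R V) {m : ℤ} (hm : 0 ≤ m) :
    ((algebraMap R K π) ^ m) • X ≤ X := by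
  lift m to ℕ using hm
  rw [zpow_natCast]
  exact latPowSmulLe (latAlgSmulLe π X) m

lemma latZpowZpow {a : K} (ha : a ≠ 0) (m k : ℤ) (X : Submodule R V) :
    a ^ m • a ^ k • X = a ^ (m + k) • X := by
  rw [smul_smul, ← zpow_add₀ ha]

lemma latZpowAntitone {π : R} (hπ0 : (algebraMap R K π) ≠ 0) {m k : ℤ} (hmk : m ≤ k)
    (X : Submodule R V) : (algebraMap R K π) ^ k • X ≤ (algebraMap R K π) ^ m • X := by
  have h := latZpowZpow hπ0 m (k - m) X
  rw [show m + (k - m) = k by omega] at h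
  rw [← h]
  exact latSmulMono _ (latZpowSmulLe π X (by omega))

lemma latSmoothing {a : K} {A X : Submodule R V} (hA : a • A ≤ A) (h : X ≤ A ⊔ a • X) :
    ∀ k : ℕ, X ≤ A ⊔ a ^ k • X := by
  intro k
  induction k with
  | zero => simpa using le_sup_right
  | succ k ih =>
    calc X ≤ A ⊔ a ^ k • X := ih
      _ ≤ A ⊔ a ^ k • (A ⊔ a • X) := sup_le_sup_left (latSmulMono _ h) A
      _ = A ⊔ (a ^ k • A ⊔ a ^ (k + 1) • X) := by
          rw [Submodule.smul_sup', smul_smul, ← pow_succ]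
      _ ≤ A ⊔ (A ⊔ a ^ (k + 1) • X) :=
          sup_le_sup_left (sup_le_sup_right (latPowSmulLe hA k) _) A
      _ = A ⊔ a ^ (k + 1) • X := by rw [← sup_assoc, sup_idem]

lemma latNakayama {π : R} (hπ : Irreducible π) {X : Submodule R V} (hfg : X.FG) (hne : X ≠ ⊥)
    (h : X ≤ (algebraMap R K π) • X) : False := by
  have hIN : X ≤ Ideal.span {π} • X := by
    intro x hx
    obtain ⟨y, hy, rfl⟩ := h hx
    show (algebraMap R K π) • y ∈ Ideal.span {π} • X
    rw [algebraMap_smul]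
    exact Submodule.smul_mem_smul (Ideal.subset_span rfl) hy
  have hjac : Ideal.span {π} ≤ Ideal.jacobson ⊥ := by
    rw [IsLocalRing.jacobson_eq_maximalIdeal ⊥ bot_ne_top, Ideal.span_le,
      Set.singleton_subset_iff]
    exact IsLocalRing.mem_maximalIdeal π |>.mpr hπ.not_isUnit
  exact hne (Submodule.eq_bot_of_le_smul_of_le_jacobson_bot (Ideal.span {π}) X hfg hIN hjac)

lemma latNakayamaZpow {π : R} (hπ : Irreducible π) (hπ0 : (algebraMap R K π) ≠ 0)
    {X : Submodule R V} (hfg : X.FG) (hne : X ≠ ⊥) {w : ℤ}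
    (h : (algebraMap R K π) ^ w • X ≤ X) : 0 ≤ w := by
  by_contra hw
  push_neg at hw
  have h1 : X ≤ (algebraMap R K π) ^ (-w) • X := by
    have h2 := latSmulMono ((algebraMap R K π) ^ (-w)) h
    rwa [latZpowZpow hπ0, show -w + w = (0 : ℤ) by omega, zpow_zero, one_smul] at h2
  have h2 : (algebraMap R K π) ^ (-w) • X ≤ (algebraMap R K π) • X := by
    have e : (algebraMap R K π) ^ (-w) = (algebraMap R K π) ^ (1 + (-w - 1)) := by
      congr 1; omega
    rw [e, zpow_add₀ hπ0, zpow_one, mul_smul]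
    exact latSmulMono _ (latZpowSmulLe π X (by omega))
  exact latNakayama hπ hfg hne (h1.trans h2)

lemma latFGsmul {X : Submodule R V} (h : X.FG) (a : K) : (a • X).FG := by
  have h2 : a • X = X.map (DistribMulAction.toLinearMap R V a) := rfl
  rw [h2]
  exact h.map _

lemma latUnitSmul (u : Rˣ) (X : Submodule R V) : (algebraMap R K (u : R)) • X = X := by
  refine le_antisymm (latAlgSmulLe _ X) ?_
  have h2 := latSmulMono (algebraMap R K (u : R)) (latAlgSmulLe (K := K) ((u⁻¹ : Rˣ) : R) X)
  rwa [smul_smul, ← map_mul, Units.mul_inv, map_one, one_smul] at h2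

lemma latExistsZpow {π : R} (hπ : Irreducible π) {e : K} (he : e ≠ 0) :
    ∃ v : ℤ, ∀ X : Submodule R V, e • X = (algebraMap R K π) ^ v • X := by
  obtain ⟨a, b, hb, hab⟩ := IsFractionRing.div_surjective (A := R) e
  have hb0 : b ≠ 0 := nonZeroDivisors.ne_zero hb
  have hbK : algebraMap R K b ≠ 0 := fun h0 =>
    hb0 ((IsFractionRing.to_map_eq_zero_iff (K := K)).mp h0)
  have ha0 : a ≠ 0 := by
    rintro rfl
    rw [map_zero, zero_div] at hab
    exact he hab.symm
  have hc0 : (algebraMap R K π) ≠ 0 := fun h0 =>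
    hπ.ne_zero ((IsFractionRing.to_map_eq_zero_iff (K := K)).mp h0)
  obtain ⟨m1, u1, rfl⟩ := IsDiscreteValuationRing.eq_unit_mul_pow_irreducible ha0 hπ
  obtain ⟨m2, u2, rfl⟩ := IsDiscreteValuationRing.eq_unit_mul_pow_irreducible hb0 hπ
  refine ⟨(m1 : ℤ) - (m2 : ℤ), fun X => ?_⟩
  have key : (algebraMap R K ((u2 : R) * π ^ m2)) • (e • X)
      = (algebraMap R K ((u1 : R) * π ^ m1)) • X := by
    rw [smul_smul, ← hab, mul_comm, div_mul_cancel₀]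
    exact hbK
  rw [map_mul, map_mul, mul_smul, mul_smul, latUnitSmul, latUnitSmul, map_pow, map_pow] at key
  -- key : (algebraMap π)^m2 • (e • X) = (algebraMap π)^m1 • X
  have key2 := congrArg (fun Y => (algebraMap R K π) ^ (-(m2 : ℤ)) • Y) key
  simp only [← zpow_natCast (algebraMap R K π)] at key2
  rw [latZpowZpow hc0, latZpowZpow hc0, show -(m2 : ℤ) + (m2 : ℤ) = 0 by omega, zpow_zero,
    one_smul, show -(m2 : ℤ) + (m1 : ℤ) = (m1 : ℤ) - (m2 : ℤ) by omega] at key2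
  exact key2

lemma latBaseAux {π : R} (hπ : Irreducible π) {L Y : Submodule R V}
    (h : LatEquiv (K := K) Y L) :
    ∃ v : ℤ, (algebraMap R K π) ^ v • L ≤ Y ∧ Y ≤ (algebraMap R K π) ^ v • L := by
  obtain ⟨e, he, heq⟩ := h
  obtain ⟨v, hv⟩ := latExistsZpow (V := V) hπ he
  rw [hv] at heq
  exact ⟨v, le_of_eq heq.symm, le_of_eq heq⟩

lemma latStepAux {π : R} (hπ : Irreducible π) {L Xc Xs M' N' : Submodule R V}
    (hM' : LatEquiv (K := K) M' Xc) (hN' : LatEquiv (K := K) N' Xs)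
    (hcN : (algebraMap R K π) • N' ≤ M') (hMN : M' ≤ N')
    {a b : ℤ} (h1 : (algebraMap R K π) ^ a • L ≤ Xs) (h2 : Xs ≤ (algebraMap R K π) ^ b • L) :
    ∃ a' b' : ℤ, a' - b' = a - b + 1 ∧ (algebraMap R K π) ^ a' • L ≤ Xc ∧
      Xc ≤ (algebraMap R K π) ^ b' • L := by
  have hc0 : (algebraMap R K π) ≠ 0 := fun h0 =>
    hπ.ne_zero ((IsFractionRing.to_map_eq_zero_iff (K := K)).mp h0)
  obtain ⟨e1, he1, heq1⟩ := hM'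
  obtain ⟨e2, he2, heq2⟩ := hN'
  obtain ⟨u, hu⟩ := latExistsZpow (V := V) hπ he1
  obtain ⟨w, hw⟩ := latExistsZpow (V := V) hπ he2
  rw [hu] at heq1
  rw [hw] at heq2
  have hN1 : (algebraMap R K π) ^ (w + a) • L ≤ N' := by
    rw [heq2, ← latZpowZpow hc0]
    exact latSmulMono _ h1
  have hN2 : N' ≤ (algebraMap R K π) ^ (w + b) • L := by
    rw [heq2, ← latZpowZpow hc0]
    exact latSmulMono _ h2
  have hM1 : (algebraMap R K π) ^ (w + a + 1) • L ≤ M' := by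
    refine le_trans ?_ (le_trans (latSmulMono _ hN1) hcN)
    rw [smul_smul, show (algebraMap R K π) * (algebraMap R K π) ^ (w + a)
        = (algebraMap R K π) ^ (w + a + 1) by
      rw [← zpow_one_add₀ hc0, show 1 + (w + a) = w + a + 1 by omega]]
  have hM2 : M' ≤ (algebraMap R K π) ^ (w + b) • L := hMN.trans hN2
  have hx : Xc = (algebraMap R K π) ^ (-u) • M' := by
    rw [heq1, latZpowZpow hc0, show -u + u = (0 : ℤ) by omega, zpow_zero, one_smul]
  refine ⟨w + a + 1 - u, w + b - u, by omega, ?_, ?_⟩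
  · rw [hx]
    have h4 := latSmulMono ((algebraMap R K π) ^ (-u)) hM1
    rwa [latZpowZpow hc0, show -u + (w + a + 1) = w + a + 1 - u by omega] at h4
  · rw [hx]
    have h4 := latSmulMono ((algebraMap R K π) ^ (-u)) hM2
    rwa [latZpowZpow hc0, show -u + (w + b) = w + b - u by omega] at h4

lemma latFinAux {π : R} (hπ : Irreducible π) {L M Y : Submodule R V}
    (h : LatEquiv (K := K) Y M)
    {a b : ℤ} (h1 : (algebraMap R K π) ^ a • L ≤ Y) (h2 : Y ≤ (algebraMap R K π) ^ b • L) :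
    ∃ a' b' : ℤ, a' - b' = a - b ∧ (algebraMap R K π) ^ a' • L ≤ M ∧
      M ≤ (algebraMap R K π) ^ b' • L := by
  have hc0 : (algebraMap R K π) ≠ 0 := fun h0 =>
    hπ.ne_zero ((IsFractionRing.to_map_eq_zero_iff (K := K)).mp h0)
  obtain ⟨e, he, heq⟩ := h
  obtain ⟨u, hu⟩ := latExistsZpow (V := V) hπ he
  rw [hu] at heq
  have hM : M = (algebraMap R K π) ^ (-u) • Y := by
    rw [heq, latZpowZpow hc0, show -u + u = (0 : ℤ) by omega, zpow_zero, one_smul]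
  refine ⟨a - u, b - u, by omega, ?_, ?_⟩
  · rw [hM]
    have h4 := latSmulMono ((algebraMap R K π) ^ (-u)) h1
    rwa [latZpowZpow hc0, show -u + a = a - u by omega] at h4
  · rw [hM]
    have h4 := latSmulMono ((algebraMap R K π) ^ (-u)) h2
    rwa [latZpowZpow hc0, show -u + b = b - u by omega] at h4

end AuxLat

set_option maxHeartbeats 1000000

/-- for full-rank lattices `M`, `L` in an `n`-dimensional `K`-vector
space, with `s = min{k : π^k L ⊆ M}` and `r = max{k : M ⊆ π^k L}`, one has `s ≥ r`
and the combinatorial distance between the classes `{M}` and `{L}` (the minimal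
number of adjacency steps) equals `s - r`. -/
theorem stmt0 {R : Type*} [CommRing R] [IsDomain R] [IsDiscreteValuationRing R]
    {K : Type*} [Field K] [Algebra R K] [IsFractionRing R K]
    {V : Type*} [AddCommGroup V] [Module K V] [Module R V] [IsScalarTower R K V]
    [SMulCommClass K R V] [FiniteDimensional K V]
    (n : ℕ) (hn : n = Module.finrank K V) (hn1 : 1 ≤ n)
    (π : R) (hπ : Irreducible π)
    (M L : Submodule R V)
    (hMfree : Module.Free R M) (hMrank : Module.finrank R M = n)
    (hMspan : Submodule.span K (M : Set V) = ⊤)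
    (hLfree : Module.Free R L) (hLrank : Module.finrank R L = n)
    (hLspan : Submodule.span K (L : Set V) = ⊤)
    (s r : ℤ)
    (hs : IsLeast {k : ℤ | ((algebraMap R K π) ^ k) • L ≤ M} s)
    (hr : IsGreatest {k : ℤ | M ≤ ((algebraMap R K π) ^ k) • L} r) :
    r ≤ s ∧
    IsLeast {d : ℕ | ∃ x : Fin (d + 1) → Submodule R V,
        LatEquiv (K := K) (x 0) M ∧ LatEquiv (K := K) (x (Fin.last d)) L ∧
        ∀ i : Fin d, LatAdjacent (K := K) π (x i.castSucc) (x i.succ)}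
      (s - r).toNat := by
  classical
  haveI := hMfree
  haveI := hLfree
  set c : K := algebraMap R K π with hcdef
  have hc0 : c ≠ 0 := fun h0 =>
    hπ.ne_zero ((IsFractionRing.to_map_eq_zero_iff (K := K)).mp h0)
  have hMfin : Module.Finite R M := Module.finite_of_finrank_pos (by omega)
  have hLfin : Module.Finite R L := Module.finite_of_finrank_pos (by omega)
  have hMfg : M.FG := Module.Finite.iff_fg.mp hMfin
  have hLfg : L.FG := Module.Finite.iff_fg.mp hLfin
  have hMne : M ≠ ⊥ := by
    rintro rfl
    rw [Module.finrank_zero_of_subsingleton] at hMrank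
    omega
  -- r ≤ s
  have hLne : L ≠ ⊥ := by
    rintro rfl
    rw [Module.finrank_zero_of_subsingleton] at hLrank
    omega
  have hrs : r ≤ s := by
    have h1 : c ^ s • L ≤ c ^ r • L := hs.1.trans hr.1
    have h2 : c ^ (s - r) • L ≤ L := by
      have h3 := latSmulMono (c ^ (-r)) h1
      rwa [latZpowZpow hc0, latZpowZpow hc0, show -r + s = s - r by omega,
        show -r + r = (0 : ℤ) by omega, zpow_zero, one_smul] at h3
    have := latNakayamaZpow hπ hc0 hLfg hLne h2
    omega
  set d0 : ℕ := (s - r).toNat with hd0def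
  have hd0 : (d0 : ℤ) = s - r := Int.toNat_of_nonneg (by omega)
  -- the main adjacency statement for the standard chain
  have hadjmain : ∀ t : ℤ, r ≤ t - 1 → t ≤ s →
      LatAdjacent (K := K) π (M ⊔ c ^ t • L) (M ⊔ c ^ (t - 1) • L) := by
    intro t hrt hts
    have hBA : c • (M ⊔ c ^ (t - 1) • L) ≤ M ⊔ c ^ t • L := by
      rw [Submodule.smul_sup']
      refine sup_le_sup (latAlgSmulLe π M) ?_
      rw [smul_smul, show c * c ^ (t - 1) = c ^ t by
        rw [← zpow_one_add₀ hc0, show 1 + (t - 1) = t by omega]]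
    have hAB : M ⊔ c ^ t • L ≤ M ⊔ c ^ (t - 1) • L :=
      sup_le_sup_left (latZpowAntitone hc0 (by omega) L) M
    refine ⟨?_, M ⊔ c ^ t • L, M ⊔ c ^ (t - 1) • L, ⟨1, one_ne_zero, (one_smul _ _).symm⟩,
      ⟨1, one_ne_zero, (one_smul _ _).symm⟩, hBA, hAB⟩
    rintro ⟨e, he, heq⟩
    obtain ⟨v, hv⟩ := latExistsZpow (V := V) hπ he
    simp only [← hcdef] at hv
    rw [hv] at heq
    set B := M ⊔ c ^ (t - 1) • L with hBdef
    have hBfg : B.FG := hMfg.sup (latFGsmul hLfg _)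
    have hBne : B ≠ ⊥ := fun h => hMne (le_bot_iff.mp (h ▸ (le_sup_left : M ≤ B)))
    have hv0 : (0 : ℤ) ≤ v := latNakayamaZpow hπ hc0 hBfg hBne (heq ▸ hAB)
    have hv1 : v ≤ 1 := by
      have h1 : c ^ (1 : ℤ) • B ≤ c ^ v • B := by
        rw [zpow_one, ← heq]; exact hBA
      have h2 : c ^ (1 - v) • B ≤ B := by
        have h3 := latSmulMono (c ^ (-v)) h1
        rwa [latZpowZpow hc0, latZpowZpow hc0, show -v + 1 = 1 - v by omega,
          show -v + v = (0 : ℤ) by omega, zpow_zero, one_smul] at h3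
      have := latNakayamaZpow hπ hc0 hBfg hBne h2
      omega
    interval_cases v
    · -- v = 0 : the two modules are equal, contradiction with minimality of s
      rw [zpow_zero, one_smul] at heq
      have hkey : c ^ (t - 1) • L ≤ M ⊔ c • (c ^ (t - 1) • L) := by
        rw [smul_smul, show c * c ^ (t - 1) = c ^ t by
          rw [← zpow_one_add₀ hc0, show 1 + (t - 1) = t by omega], heq, hBdef]
        exact le_sup_right
      have hsm := latSmoothing (latAlgSmulLe π _) hkey (s - t + 1).toNat
      rw [smul_smul, ← zpow_natCast c, ← zpow_add₀ hc0,
        show ((s - t + 1).toNat : ℤ) + (t - 1) = s by omega] at hsm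
      have : (t - 1) ∈ {k : ℤ | c ^ k • L ≤ M} := by
        refine hsm.trans ?_
        rw [sup_eq_left.mpr hs.1]
      have := hs.2 this
      omega
    · -- v = 1 : M ⊔ c^t L = c M ⊔ c^t L, contradiction with maximality of r
      rw [zpow_one, hBdef, Submodule.smul_sup', smul_smul,
        show c * c ^ (t - 1) = c ^ t by
          rw [← zpow_one_add₀ hc0, show 1 + (t - 1) = t by omega]] at heq
      have hMle : M ≤ c ^ t • L ⊔ c • M := by
        rw [sup_comm]
        exact le_sup_left.trans (le_of_eq heq)
      have hcA : c • (c ^ t • L) ≤ c ^ t • L := by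
        rw [smul_smul, show c * c ^ t = c ^ (t + 1) by
          rw [← zpow_one_add₀ hc0, show 1 + t = t + 1 by omega]]
        exact latZpowAntitone hc0 (by omega) L
      have hsm := latSmoothing hcA hMle (t - r).toNat
      have hpow : c ^ (t - r).toNat • M ≤ c ^ t • L := by
        have h4 := latSmulMono (c ^ (t - r).toNat) hr.1
        refine h4.trans ?_
        rw [← zpow_natCast c ((t - r).toNat), latZpowZpow hc0,
          show ((t - r).toNat : ℤ) + r = t by omega]
      have hM : M ≤ c ^ t • L := hsm.trans (sup_le le_rfl hpow)
      have := hr.2 hM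
      omega
  refine ⟨hrs, ?_, ?_⟩
  · -- membership : the standard chain realizes distance d0
    refine ⟨fun i => M ⊔ c ^ (s - ((i : ℕ) : ℤ)) • L, ?_, ?_, ?_⟩
    · refine ⟨1, one_ne_zero, ?_⟩
      show M ⊔ c ^ (s - (((0 : Fin (d0 + 1)) : ℕ) : ℤ)) • L = (1 : K) • M
      rw [one_smul]
      simp only [Fin.val_zero, Nat.cast_zero, sub_zero]
      exact sup_eq_left.mpr hs.1
    · refine ⟨c ^ r, zpow_ne_zero r hc0, ?_⟩
      show M ⊔ c ^ (s - (((Fin.last d0) : ℕ) : ℤ)) • L = c ^ r • L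
      rw [Fin.val_last, show s - ((d0 : ℕ) : ℤ) = r by omega]
      exact sup_eq_right.mpr hr.1
    · intro i
      show LatAdjacent (K := K) π (M ⊔ c ^ (s - ((i.castSucc : ℕ) : ℤ)) • L)
        (M ⊔ c ^ (s - ((i.succ : ℕ) : ℤ)) • L)
      have e1 : s - ((i.castSucc : ℕ) : ℤ) = s - (i : ℕ) := by
        simp [Fin.coe_castSucc]
      have e2 : s - ((i.succ : ℕ) : ℤ) = s - (i : ℕ) - 1 := by
        simp only [Fin.val_succ]
        push_cast
        ring
      rw [e1, e2]
      have hi : (i : ℕ) < d0 := i.isLt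
      exact hadjmain (s - (i : ℕ)) (by omega) (by omega)
  · -- lower bound
    rintro d ⟨x, hx0, hxl, hadj⟩
    show (s - r).toNat ≤ d
    rw [Int.toNat_le]
    have key : ∀ j : ℕ, j ≤ d → ∃ a b : ℤ,
        (algebraMap R K π) ^ a • L ≤ x ⟨d - j, by omega⟩ ∧
        x ⟨d - j, by omega⟩ ≤ (algebraMap R K π) ^ b • L ∧ a - b ≤ (j : ℤ) := by
      intro j
      induction j with
      | zero =>
        intro _
        have hlast : (Fin.last d) = (⟨d - 0, by omega⟩ : Fin (d + 1)) := by
          apply Fin.ext; simp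
        rw [hlast] at hxl
        obtain ⟨v, hv1, hv2⟩ := latBaseAux (π := π) hπ hxl
        exact ⟨v, v, hv1, hv2, by simp⟩
      | succ j ih =>
        intro hjd
        obtain ⟨a, b, h1, h2, h3⟩ := ih (by omega)
        have hi : d - j - 1 < d := by omega
        obtain ⟨hne, M', N', hM', hN', hcN, hMN⟩ := hadj ⟨d - j - 1, hi⟩
        have hcs : (⟨d - j - 1, hi⟩ : Fin d).castSucc = (⟨d - (j + 1), by omega⟩ : Fin (d + 1)) := by
          apply Fin.ext; simp [Fin.coe_castSucc]; omega
        have hsc : (⟨d - j - 1, hi⟩ : Fin d).succ = (⟨d - j, by omega⟩ : Fin (d + 1)) := by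
          apply Fin.ext; simp [Fin.val_succ]; omega
        rw [hcs] at hM'
        rw [hsc] at hN'
        obtain ⟨a', b', hdiff, hh1, hh2⟩ := latStepAux hπ hM' hN' hcN hMN h1 h2
        exact ⟨a', b', hh1, hh2, by push_cast; omega⟩
    obtain ⟨a, b, h1, h2, h3⟩ := key d le_rfl
    have h0 : (⟨d - d, by omega⟩ : Fin (d + 1)) = 0 := by
      apply Fin.ext; simp
    rw [h0] at h1 h2
    obtain ⟨a', b', hdiff, hh1, hh2⟩ := latFinAux hπ hx0 h1 h2
    have hsa : s ≤ a' := hs.2 hh1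
    have hrb : b' ≤ r := hr.2 hh2
    omega
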